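/- For every integer T ≥ 1, every real m > 0, every v ∈ (−1/√(1+m²), 1/√(1+m²)), and every real c, there exists an integer sequence (x_t) with x_t = v·t + o(√t) as t → ∞ such that ρ_{2π}(c, δ_t^+) does not tend to 0 as t → ∞. -/

import Mathlib

open Complex Real Filter Asymptotics

noncomputable section

/-- Number of turns of the checker path with `T` moves whose set of indices of
rightward moves (among moves `0, …, T-1`) is `R`. -/
def turnsOf (T : ℕ) (R : Finset ℕ) : ℕ :=
  ((Finset.Ico 1 T).filter fun i => ¬((i ∈ R) ↔ (i - 1 ∈ R))).card

/-- The Feynman-checkers wave function on the integer lattice, with `μ = m·ε`: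
`waveA X T μ = a(X·ε, T·ε, m, ε)`.  A checker path from `(0,0)` to `(X·ε, T·ε)`
consists of `T` moves, each `(ε,ε)` ("right") or `(-ε,ε)` ("left"); it is
determined by the set `R ⊆ {0,…,T-1}` of indices of its rightward moves.  The
path ends at `X·ε` iff `R.card - (T - R.card) = X`, and its second point is
`(ε,ε)` iff `0 ∈ R`. -/
def waveA (X : ℤ) (T : ℕ) (μ : ℝ) : ℂ :=
  (((1 + μ ^ 2) ^ ((1 - (T : ℝ)) / 2) : ℝ) : ℂ) * Complex.I *
    ∑ R ∈ (Finset.range T).powerset,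
      if 0 ∈ R ∧ 2 * (R.card : ℤ) - (T : ℤ) = X then
        (-Complex.I * (μ : ℂ)) ^ turnsOf T R
      else 0

/-- The wave function `a(x, t, m, ε)` for lattice points `(x,t) ∈ εℤ²`. -/
def wf (x t m ε : ℝ) : ℂ := waveA ⌊x / ε⌋ ⌊t / ε⌋.toNat (m * ε)

/-- `ã₁(x, t, m, ε) = Re a(x, t+ε, m, ε)`. -/
def a1 (x t m ε : ℝ) : ℝ := (wf x (t + ε) m ε).re

/-- `ã₂(x, t, m, ε) = Im a(x+ε, t+ε, m, ε)`. -/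
def a2 (x t m ε : ℝ) : ℝ := (wf (x + ε) (t + ε) m ε).im

end

/-- The phase `θ(x, t, m, ε)`. -/
noncomputable def theta (x t m ε : ℝ) : ℝ :=
  (t / ε) *
      (Real.arcsin (m * ε / Real.sqrt ((1 + m ^ 2 * ε ^ 2) * (1 - (x / t) ^ 2))) -
        (x / t) * Real.arcsin (m * ε * (x / t) / Real.sqrt (1 - (x / t) ^ 2))) +
    π / 4

/-- `ρ_p(a, b)`: the distance from `b − a` to the nearest point of `pℤ`. -/
noncomputable def rho (p a b : ℝ) : ℝ := ⨅ k : ℤ, |b - a - p * k|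

/-- `δ_t^− = θ(x_t, t, m) − θ(x_t − 2T, t, m)` (lattice step `ε = 1`). -/
noncomputable def deltaMinus (m : ℝ) (T : ℕ) (x : ℕ → ℤ) (t : ℕ) : ℝ :=
  theta (x t : ℝ) (t : ℝ) m 1 - theta ((x t : ℝ) - 2 * T) (t : ℝ) m 1

/-- `δ_t^+ = θ(x_t, t, m) + θ(x_t − 2T, t, m)` (lattice step `ε = 1`). -/
noncomputable def deltaPlus (m : ℝ) (T : ℕ) (x : ℕ → ℤ) (t : ℕ) : ℝ :=
  theta (x t : ℝ) (t : ℝ) m 1 + theta ((x t : ℝ) - 2 * T) (t : ℝ) m 1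

/-- `γ_t = min {ρ_{2π}(0, δ_t^−), ρ_{2π}(π, δ_t^+)}`. -/
noncomputable def gammaSeq (m : ℝ) (T : ℕ) (x : ℕ → ℤ) (t : ℕ) : ℝ :=
  min (rho (2 * π) 0 (deltaMinus m T x t)) (rho (2 * π) π (deltaPlus m T x t))

section Stmt12Aux
open Real Filter Topology

noncomputable def gph (m : ℝ) : ℝ → ℝ := fun u =>
  Real.arcsin (m / Real.sqrt ((1 + m ^ 2) * (1 - u ^ 2))) -
    u * Real.arcsin (m * u / Real.sqrt (1 - u ^ 2))

lemma hasDeriv_gph {m v : ℝ} (hm : 0 < m) (hw : 0 < 1 - (1 + m ^ 2) * v ^ 2) :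
    HasStrictDerivAt (gph m) (-Real.arcsin (m * v / Real.sqrt (1 - v ^ 2))) v := by
  have hm2 : (0:ℝ) < 1 + m ^ 2 := by positivity
  have hP : 0 < 1 - v ^ 2 := by nlinarith [sq_nonneg v, sq_nonneg m, sq_nonneg (m*v)]
  have hz : 0 < (1 + m ^ 2) * (1 - v ^ 2) := by positivity
  have hsP : 0 < Real.sqrt (1 - v ^ 2) := Real.sqrt_pos.2 hP
  have hsw : 0 < Real.sqrt (1 - (1 + m ^ 2) * v ^ 2) := Real.sqrt_pos.2 hw
  have hsz : 0 < Real.sqrt ((1 + m ^ 2) * (1 - v ^ 2)) := Real.sqrt_pos.2 hz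
  have hsP2 : Real.sqrt (1 - v ^ 2) ^ 2 = 1 - v ^ 2 := Real.sq_sqrt hP.le
  have hsz2 : Real.sqrt ((1 + m ^ 2) * (1 - v ^ 2)) ^ 2 = (1 + m ^ 2) * (1 - v ^ 2) :=
    Real.sq_sqrt hz.le
  have h1 : HasStrictDerivAt (fun u : ℝ => 1 - u ^ 2) (-2 * v) v := by
    simpa using (hasStrictDerivAt_pow 2 v).const_sub 1
  -- the function h
  have hB : HasStrictDerivAt (fun u : ℝ => m * u / Real.sqrt (1 - u ^ 2))
      (m / (Real.sqrt (1 - v ^ 2) * (1 - v ^ 2))) v := by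
    have h2 := h1.sqrt hP.ne'
    have h4 := ((hasStrictDerivAt_id v).const_mul m).div h2 hsP.ne'
    refine HasStrictDerivAt.congr_deriv h4 ?_
    simp only [id_eq]
    rw [show m * 1 * Real.sqrt (1 - v ^ 2) - m * v * (-2 * v / (2 * Real.sqrt (1 - v ^ 2)))
        = m / Real.sqrt (1 - v ^ 2) from by
      field_simp
      linear_combination hsP2]
    rw [hsP2, div_div]
  have hBsq : (m * v / Real.sqrt (1 - v ^ 2)) ^ 2 < 1 := by
    rw [div_pow, hsP2]
    rw [div_lt_one hP]
    nlinarith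
  have hBabs := abs_lt.1 ((sq_lt_one_iff_abs_lt_one _).1 hBsq)
  have hne1 : m * v / Real.sqrt (1 - v ^ 2) ≠ -1 := by linarith [hBabs.1]
  have hne2 : m * v / Real.sqrt (1 - v ^ 2) ≠ 1 := by linarith [hBabs.2]
  have hdh : HasStrictDerivAt (fun u : ℝ => Real.arcsin (m * u / Real.sqrt (1 - u ^ 2)))
      (m / ((1 - v ^ 2) * Real.sqrt (1 - (1 + m ^ 2) * v ^ 2))) v := by
    have := (Real.hasStrictDerivAt_arcsin hne1 hne2).comp v hB
    refine HasStrictDerivAt.congr_deriv this ?_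
    have e1 : (1 : ℝ) - (m * v / Real.sqrt (1 - v ^ 2)) ^ 2
        = (1 - (1 + m ^ 2) * v ^ 2) / (1 - v ^ 2) := by
      rw [div_pow, hsP2]; field_simp; ring
    rw [e1, Real.sqrt_div hw.le]
    field_simp
  -- the function G
  have hA : HasStrictDerivAt (fun u : ℝ => m / Real.sqrt ((1 + m ^ 2) * (1 - u ^ 2)))
      (m * (1 + m ^ 2) * v /
        (Real.sqrt ((1 + m ^ 2) * (1 - v ^ 2)) * ((1 + m ^ 2) * (1 - v ^ 2)))) v := by
    have h1' : HasStrictDerivAt (fun u : ℝ => (1 + m ^ 2) * (1 - u ^ 2))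
        ((1 + m ^ 2) * (-2 * v)) v := h1.const_mul _
    have h2' := h1'.sqrt hz.ne'
    have h4' := (hasStrictDerivAt_const v m).div h2' hsz.ne'
    refine HasStrictDerivAt.congr_deriv h4' ?_
    rw [show (0 : ℝ) * Real.sqrt ((1 + m ^ 2) * (1 - v ^ 2)) -
        m * ((1 + m ^ 2) * (-2 * v) / (2 * Real.sqrt ((1 + m ^ 2) * (1 - v ^ 2))))
        = m * (1 + m ^ 2) * v / Real.sqrt ((1 + m ^ 2) * (1 - v ^ 2)) from by
      field_simp
      ring]
    rw [hsz2, div_div]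
  have hAsq : (m / Real.sqrt ((1 + m ^ 2) * (1 - v ^ 2))) ^ 2 < 1 := by
    rw [div_pow, hsz2, div_lt_one hz]
    nlinarith
  have hAabs := abs_lt.1 ((sq_lt_one_iff_abs_lt_one _).1 hAsq)
  have hAne1 : m / Real.sqrt ((1 + m ^ 2) * (1 - v ^ 2)) ≠ -1 := by linarith [hAabs.1]
  have hAne2 : m / Real.sqrt ((1 + m ^ 2) * (1 - v ^ 2)) ≠ 1 := by linarith [hAabs.2]
  have hdG : HasStrictDerivAt
      (fun u : ℝ => Real.arcsin (m / Real.sqrt ((1 + m ^ 2) * (1 - u ^ 2))))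
      (m * v / ((1 - v ^ 2) * Real.sqrt (1 - (1 + m ^ 2) * v ^ 2))) v := by
    have := (Real.hasStrictDerivAt_arcsin hAne1 hAne2).comp v hA
    refine HasStrictDerivAt.congr_deriv this ?_
    have e1 : (1 : ℝ) - (m / Real.sqrt ((1 + m ^ 2) * (1 - v ^ 2))) ^ 2
        = (1 - (1 + m ^ 2) * v ^ 2) / ((1 + m ^ 2) * (1 - v ^ 2)) := by
      rw [div_pow, hsz2]; field_simp; ring
    rw [e1, Real.sqrt_div hw.le]
    field_simp
  have hmul := (hasStrictDerivAt_id v).mul hdh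
  have := hdG.sub hmul
  refine HasStrictDerivAt.congr_deriv this ?_
  simp only [id]
  ring

lemma mulDiff {g : ℝ → ℝ} {d v L : ℝ} (hg : HasStrictDerivAt g d v)
    {a b c : ℕ → ℝ} (ha : Tendsto a atTop (𝓝 v)) (hb : Tendsto b atTop (𝓝 v))
    (hc : Tendsto (fun k => c k * (b k - a k)) atTop (𝓝 L)) :
    Tendsto (fun k => c k * (g (b k) - g (a k))) atTop (𝓝 (L * d)) := by
  have hprod : Tendsto (fun k => (b k, a k)) atTop (𝓝 (v, v)) := hb.prodMk_nhds ha
  have hO := hg.hasStrictFDerivAt.isLittleO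
  have key : Tendsto (fun k => c k * (g (b k) - g (a k)) - c k * (b k - a k) * d)
      atTop (𝓝 0) := by
    rw [NormedAddCommGroup.tendsto_nhds_zero]
    intro ε hε
    have hL1 : ∀ᶠ k in atTop, |c k * (b k - a k)| < |L| + 1 :=
      (hc.abs).eventually (eventually_lt_nhds (lt_add_one |L|))
    have hε' : (0:ℝ) < ε / (2 * (|L| + 1)) := by positivity
    have hbound := hprod.eventually (hO.def hε')
    filter_upwards [hL1, hbound] with k h1 h2
    simp only [ContinuousLinearMap.smulRight_apply, ContinuousLinearMap.one_apply,
      smul_eq_mul, Real.norm_eq_abs] at h2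
    have e1 : c k * (g (b k) - g (a k)) - c k * (b k - a k) * d
        = c k * (g (b k) - g (a k) - (b k - a k) * d) := by ring
    rw [Real.norm_eq_abs, e1, abs_mul]
    have step1 : |c k| * |g (b k) - g (a k) - (b k - a k) * d|
        ≤ |c k| * (ε / (2 * (|L| + 1)) * |b k - a k|) :=
      mul_le_mul_of_nonneg_left h2 (abs_nonneg _)
    have step2 : |c k| * (ε / (2 * (|L| + 1)) * |b k - a k|)
        = ε / (2 * (|L| + 1)) * |c k * (b k - a k)| := by rw [abs_mul]; ring
    have step3 : ε / (2 * (|L| + 1)) * |c k * (b k - a k)|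
        ≤ ε / (2 * (|L| + 1)) * (|L| + 1) :=
      mul_le_mul_of_nonneg_left h1.le hε'.le
    have step4 : ε / (2 * (|L| + 1)) * (|L| + 1) = ε / 2 := by
      field_simp
    have : (0:ℝ) < ε := hε
    calc |c k| * |g (b k) - g (a k) - (b k - a k) * d|
        ≤ ε / (2 * (|L| + 1)) * |c k * (b k - a k)| := by rw [← step2]; exact step1
      _ ≤ ε / 2 := by rw [← step4]; exact step3
      _ < ε := by linarith
  have hfinal := key.add (hc.mul_const d)
  have : (0:ℝ) + L * d = L * d := by ring
  rw [← this]
  refine hfinal.congr fun k => by ring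

lemma pairLimit {m v : ℝ} (hm : 0 < m) (hw : 0 < 1 - (1 + m ^ 2) * v ^ 2)
    (C : ℝ) (y : ℕ → ℝ) (hy : ∀ k, |y k - v * (2 * k)| ≤ C) :
    Tendsto (fun k : ℕ => (2 * (k : ℝ) + 1) * gph m (y k / (2 * (k : ℝ) + 1)) -
        (2 * (k : ℝ)) * gph m (y k / (2 * (k : ℝ)))) atTop
      (𝓝 (Real.arcsin (m / Real.sqrt ((1 + m ^ 2) * (1 - v ^ 2))))) := by
  have h2k : Tendsto (fun k : ℕ => 2 * (k:ℝ)) atTop atTop :=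
    tendsto_atTop_mono (fun k => by have := Nat.cast_nonneg (α := ℝ) k; linarith)
      tendsto_natCast_atTop_atTop
  have h2k1 : Tendsto (fun k : ℕ => 2 * (k:ℝ) + 1) atTop atTop :=
    tendsto_atTop_mono (fun k => by have := Nat.cast_nonneg (α := ℝ) k; linarith)
      tendsto_natCast_atTop_atTop
  have hb : Tendsto (fun k : ℕ => y k / (2 * (k:ℝ) + 1)) atTop (𝓝 v) := by
    rw [← tendsto_sub_nhds_zero_iff]
    have hlim : Tendsto (fun k : ℕ => (C + |v|) / (2*(k:ℝ)+1)) atTop (𝓝 0) :=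
      tendsto_const_nhds.div_atTop h2k1
    apply squeeze_zero_norm' _ hlim
    filter_upwards [eventually_ge_atTop 0] with k _
    have hk1 : (0:ℝ) < 2 * (k:ℝ) + 1 := by positivity
    rw [Real.norm_eq_abs,
      show y k / (2*(k:ℝ)+1) - v = (y k - v * (2*(k:ℝ)) - v) / (2*(k:ℝ)+1) from by
        field_simp; ring,
      abs_div, abs_of_pos hk1]
    rw [div_le_div_iff_of_pos_right hk1]
    calc |y k - v * (2*(k:ℝ)) - v| ≤ |y k - v * (2*(k:ℝ))| + |v| := abs_sub _ _
      _ ≤ C + |v| := add_le_add (hy k) le_rfl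
  have ha : Tendsto (fun k : ℕ => y k / (2 * (k:ℝ))) atTop (𝓝 v) := by
    rw [← tendsto_sub_nhds_zero_iff]
    have hlim : Tendsto (fun k : ℕ => C / (2*(k:ℝ))) atTop (𝓝 0) :=
      tendsto_const_nhds.div_atTop h2k
    apply squeeze_zero_norm' _ hlim
    filter_upwards [eventually_ge_atTop 1] with k hk
    have hk1 : (0:ℝ) < 2 * (k:ℝ) := by
      have : (1:ℝ) ≤ (k:ℝ) := by exact_mod_cast hk
      linarith
    rw [Real.norm_eq_abs,
      show y k / (2*(k:ℝ)) - v = (y k - v * (2*(k:ℝ))) / (2*(k:ℝ)) from by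
        field_simp,
      abs_div, abs_of_pos hk1]
    rw [div_le_div_iff_of_pos_right hk1]
    exact hy k
  have hc : Tendsto (fun k : ℕ => (2*(k:ℝ)) *
      (y k / (2*(k:ℝ)+1) - y k / (2*(k:ℝ)))) atTop (𝓝 (-v)) := by
    apply (hb.neg).congr'
    filter_upwards [eventually_ge_atTop 1] with k hk
    have hk0 : (2:ℝ) * (k:ℝ) ≠ 0 := by
      have : (1:ℝ) ≤ (k:ℝ) := by exact_mod_cast hk
      positivity
    have hk10 : (2:ℝ) * (k:ℝ) + 1 ≠ 0 := by
      have : (0:ℝ) ≤ (k:ℝ) := Nat.cast_nonneg k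
      positivity
    field_simp
    ring
  have hd := hasDeriv_gph hm hw
  have hgb : Tendsto (fun k : ℕ => gph m (y k / (2*(k:ℝ)+1))) atTop (𝓝 (gph m v)) :=
    (hd.hasDerivAt.continuousAt.tendsto).comp hb
  have hmain := mulDiff hd ha hb hc
  have hsum := hgb.add hmain
  have hval : Real.arcsin (m / Real.sqrt ((1 + m ^ 2) * (1 - v ^ 2)))
      = gph m v + -v * -Real.arcsin (m * v / Real.sqrt (1 - v ^ 2)) := by
    simp only [gph]; ring
  rw [hval]
  exact hsum.congr fun k => by ring


end Stmt12Aux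

section
open Real Filter Topology
set_option maxHeartbeats 2000000 in
theorem stmt12 (T : ℕ) (hT : 1 ≤ T) (m : ℝ) (hm : 0 < m)
    (v : ℝ) (hv : v ∈ Set.Ioo (-(1 / Real.sqrt (1 + m ^ 2))) (1 / Real.sqrt (1 + m ^ 2)))
    (c : ℝ) :
    ∃ x : ℕ → ℤ,
      ((fun t : ℕ => (x t : ℝ) - v * t) =o[Filter.atTop]
        (fun t : ℕ => (t : ℝ) ^ ((1 : ℝ) / 2))) ∧
      ¬ Filter.Tendsto (fun t : ℕ => rho (2 * π) c (deltaPlus m T x t))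
          Filter.atTop (nhds 0) := by
  obtain ⟨hv1, hv2⟩ := hv
  have hm2 : (0:ℝ) < 1 + m ^ 2 := by positivity
  have hs : 0 < Real.sqrt (1 + m ^ 2) := Real.sqrt_pos.2 (by positivity)
  have habs : |v| < 1 / Real.sqrt (1 + m ^ 2) := abs_lt.2 ⟨hv1, hv2⟩
  have habs2 : |v| * Real.sqrt (1 + m ^ 2) < 1 := by
    rw [← lt_div_iff₀ hs]; exact habs
  have hw : 0 < 1 - (1 + m ^ 2) * v ^ 2 := by
    nlinarith [mul_nonneg (abs_nonneg v) hs.le, _root_.sq_abs v,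
      Real.sq_sqrt hm2.le, abs_nonneg v, hs]
  have hP : 0 < 1 - v ^ 2 := by nlinarith [sq_nonneg v, sq_nonneg (m * v)]
  have hz : 0 < (1 + m ^ 2) * (1 - v ^ 2) := by positivity
  have hsz : 0 < Real.sqrt ((1 + m ^ 2) * (1 - v ^ 2)) := Real.sqrt_pos.2 hz
  refine ⟨fun t => ⌊v * ((2 * (t / 2) : ℕ) : ℝ)⌋, ?_, ?_⟩
  · -- little-o
    have hb : ∀ t : ℕ, ‖((⌊v * ((2 * (t / 2) : ℕ) : ℝ)⌋ : ℤ) : ℝ) - v * t‖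
        ≤ (1 + |v|) * ‖(1:ℝ)‖ := by
      intro t
      have hfl : |((⌊v * ((2 * (t / 2) : ℕ) : ℝ)⌋ : ℤ) : ℝ) - v * ((2 * (t / 2) : ℕ) : ℝ)|
          ≤ 1 := by
        have h1 := Int.floor_le (v * ((2 * (t / 2) : ℕ) : ℝ))
        have h2 := Int.sub_one_lt_floor (v * ((2 * (t / 2) : ℕ) : ℝ))
        rw [abs_le]; constructor <;> linarith
      have hnear : |v * ((2 * (t / 2) : ℕ) : ℝ) - v * t| ≤ |v| := by
        rw [show v * ((2 * (t / 2) : ℕ) : ℝ) - v * t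
            = v * (((2 * (t / 2) : ℕ) : ℝ) - t) from by ring, abs_mul]
        have h3 : 2 * (t / 2) ≤ t := by omega
        have h4 : t ≤ 2 * (t / 2) + 1 := by omega
        have c3 : ((2 * (t / 2) : ℕ) : ℝ) ≤ (t : ℝ) := by exact_mod_cast h3
        have c4 : (t : ℝ) ≤ ((2 * (t / 2) : ℕ) : ℝ) + 1 := by exact_mod_cast h4
        have h5 : |((2 * (t / 2) : ℕ) : ℝ) - t| ≤ 1 := by
          rw [abs_le]; constructor <;> linarith
        calc |v| * |((2 * (t / 2) : ℕ) : ℝ) - (t:ℝ)| ≤ |v| * 1 :=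
              mul_le_mul_of_nonneg_left h5 (abs_nonneg v)
          _ = |v| := mul_one _
      have : ‖(1:ℝ)‖ = 1 := by simp
      rw [this, mul_one, Real.norm_eq_abs]
      calc |((⌊v * ((2 * (t / 2) : ℕ) : ℝ)⌋ : ℤ) : ℝ) - v * t|
          ≤ |((⌊v * ((2 * (t / 2) : ℕ) : ℝ)⌋ : ℤ) : ℝ) - v * ((2 * (t / 2) : ℕ) : ℝ)|
            + |v * ((2 * (t / 2) : ℕ) : ℝ) - v * t| := abs_sub_le _ _ _
        _ ≤ 1 + |v| := add_le_add hfl hnear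
    have hO : (fun t : ℕ => ((⌊v * ((2 * (t / 2) : ℕ) : ℝ)⌋ : ℤ) : ℝ) - v * t)
        =O[atTop] (fun _ : ℕ => (1:ℝ)) :=
      Asymptotics.IsBigO.of_bound (1 + |v|) (Filter.Eventually.of_forall hb)
    refine hO.trans_isLittleO ?_
    rw [Asymptotics.isLittleO_const_left]
    right
    have h1 : Tendsto (fun t : ℕ => ((t:ℝ)) ^ ((1:ℝ)/2)) atTop atTop :=
      (tendsto_rpow_atTop (by norm_num)).comp tendsto_natCast_atTop_atTop
    exact tendsto_abs_atTop_atTop.comp h1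
  · -- non-convergence
    intro hten
    have hA1 : m / Real.sqrt ((1 + m ^ 2) * (1 - v ^ 2)) < 1 := by
      rw [div_lt_one hsz]
      exact (Real.lt_sqrt hm.le).2 (by nlinarith)
    have hA0 : 0 < m / Real.sqrt ((1 + m ^ 2) * (1 - v ^ 2)) := by positivity
    set A := Real.arcsin (m / Real.sqrt ((1 + m ^ 2) * (1 - v ^ 2))) with hAdef
    have hL0 : 0 < A := Real.arcsin_pos.2 hA0
    have hLpi2 : A < π / 2 := Real.arcsin_lt_pi_div_two.2 hA1
    have hpi := Real.pi_pos
    set L : ℝ := 2 * A with hLdef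
    -- values of the sequence at even/odd indices
    have hXe : ∀ k : ℕ, (fun t : ℕ => ⌊v * ((2 * (t / 2) : ℕ) : ℝ)⌋) (2 * k)
        = ⌊v * (2 * (k : ℝ))⌋ := by
      intro k
      simp only
      rw [show 2 * (2 * k / 2) = 2 * k from by omega]
      norm_num
    have hXo : ∀ k : ℕ, (fun t : ℕ => ⌊v * ((2 * (t / 2) : ℕ) : ℝ)⌋) (2 * k + 1)
        = ⌊v * (2 * (k : ℝ))⌋ := by
      intro k
      simp only
      rw [show 2 * ((2 * k + 1) / 2) = 2 * k from by omega]
      norm_num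
    -- the two floor-sequences
    have hy₁ : ∀ k : ℕ, |((⌊v * (2 * (k:ℝ))⌋ : ℤ) : ℝ) - v * (2 * (k:ℝ))| ≤ 1 := by
      intro k
      have h1 := Int.floor_le (v * (2 * (k:ℝ)))
      have h2 := Int.sub_one_lt_floor (v * (2 * (k:ℝ)))
      rw [abs_le]; constructor <;> linarith
    have hy₂ : ∀ k : ℕ, |(((⌊v * (2 * (k:ℝ))⌋ : ℤ) : ℝ) - 2 * (T:ℝ)) - v * (2 * (k:ℝ))|
        ≤ 1 + 2 * (T:ℝ) := by
      intro k
      have h1 := hy₁ k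
      have h2 : (0:ℝ) ≤ 2 * (T:ℝ) := by positivity
      rw [abs_le] at h1 ⊢
      constructor <;> [linarith [h1.1]; linarith [h1.2]]
    have hdp : ∀ t : ℕ, deltaPlus m T (fun t : ℕ => ⌊v * ((2 * (t / 2) : ℕ) : ℝ)⌋) t
        = (t:ℝ) * gph m (((fun t : ℕ => ⌊v * ((2 * (t / 2) : ℕ) : ℝ)⌋) t : ℝ) / t)
          + (t:ℝ) * gph m ((((fun t : ℕ => ⌊v * ((2 * (t / 2) : ℕ) : ℝ)⌋) t : ℝ) - 2 * T) / t)
          + π / 2 := by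
      intro t
      simp only [deltaPlus, theta, gph]
      push_cast
      ring
    have hD : Tendsto (fun k : ℕ =>
        deltaPlus m T (fun t : ℕ => ⌊v * ((2 * (t / 2) : ℕ) : ℝ)⌋) (2 * k + 1)
          - deltaPlus m T (fun t : ℕ => ⌊v * ((2 * (t / 2) : ℕ) : ℝ)⌋) (2 * k))
        atTop (𝓝 L) := by
      have p1 := pairLimit hm hw 1 (fun k => ((⌊v * (2 * (k:ℝ))⌋ : ℤ) : ℝ)) hy₁
      have p2 := pairLimit hm hw (1 + 2 * (T:ℝ))
        (fun k => ((⌊v * (2 * (k:ℝ))⌋ : ℤ) : ℝ) - 2 * (T:ℝ)) hy₂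
      have hsum := p1.add p2
      rw [hLdef, hAdef, two_mul]
      refine Tendsto.congr (fun k => ?_) hsum
      rw [hdp (2 * k + 1), hdp (2 * k), hXo k, hXe k]
      push_cast
      ring
    -- derive the contradiction
    set ε : ℝ := min L (2 * π - L) / 4 with hεdef
    have hLlt : L < 2 * π := by linarith
    have hε : 0 < ε := by
      have : 0 < min L (2 * π - L) := lt_min (by linarith) (by linarith)
      linarith
    have hmono1 : Tendsto (fun k : ℕ => 2 * k) atTop atTop :=
      tendsto_atTop_mono (fun k => by simp only [id_eq]; omega) tendsto_id
    have hmono2 : Tendsto (fun k : ℕ => 2 * k + 1) atTop atTop :=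
      tendsto_atTop_mono (fun k => by simp only [id_eq]; omega) tendsto_id
    have h1 := hten.comp hmono1
    have h2 := hten.comp hmono2
    have hev1 := h1.eventually (eventually_lt_nhds hε)
    have hev2 := h2.eventually (eventually_lt_nhds hε)
    have hev3 : ∀ᶠ k : ℕ in atTop,
        |(deltaPlus m T (fun t : ℕ => ⌊v * ((2 * (t / 2) : ℕ) : ℝ)⌋) (2 * k + 1)
          - deltaPlus m T (fun t : ℕ => ⌊v * ((2 * (t / 2) : ℕ) : ℝ)⌋) (2 * k)) - L| < ε := by
      have h := Metric.tendsto_nhds.mp hD ε hε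
      filter_upwards [h] with k hk
      rwa [Real.dist_eq] at hk
    obtain ⟨k, hk1, hk2, hk3⟩ := (hev1.and (hev2.and hev3)).exists
    simp only [Function.comp, rho] at hk1 hk2
    obtain ⟨i, hi⟩ := exists_lt_of_ciInf_lt hk1
    obtain ⟨j, hj⟩ := exists_lt_of_ciInf_lt hk2
    set Da := deltaPlus m T (fun t : ℕ => ⌊v * ((2 * (t / 2) : ℕ) : ℝ)⌋) (2 * k) with hDa
    set Db := deltaPlus m T (fun t : ℕ => ⌊v * ((2 * (t / 2) : ℕ) : ℝ)⌋) (2 * k + 1) with hDb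
    have h5 : |(Db - Da) - 2 * π * ((j:ℝ) - (i:ℝ))|
        ≤ |Db - c - 2 * π * (j:ℝ)| + |Da - c - 2 * π * (i:ℝ)| := by
      rw [show (Db - Da) - 2 * π * ((j:ℝ) - (i:ℝ))
          = (Db - c - 2 * π * (j:ℝ)) - (Da - c - 2 * π * (i:ℝ)) from by ring]
      exact abs_sub _ _
    have h6 : |L - 2 * π * ((j:ℝ) - (i:ℝ))|
        ≤ |(Db - Da) - L| + |(Db - Da) - 2 * π * ((j:ℝ) - (i:ℝ))| := by
      rw [show L - 2 * π * ((j:ℝ) - (i:ℝ))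
          = -((Db - Da) - L) + ((Db - Da) - 2 * π * ((j:ℝ) - (i:ℝ))) from by ring]
      exact (abs_add_le _ _).trans (by rw [abs_neg])
    have h7 : |L - 2 * π * ((j:ℝ) - (i:ℝ))| < 3 * ε := by
      calc |L - 2 * π * ((j:ℝ) - (i:ℝ))|
          ≤ |(Db - Da) - L| + (|Db - c - 2 * π * (j:ℝ)| + |Da - c - 2 * π * (i:ℝ)|) := by
            linarith [h5, h6]
        _ < ε + (ε + ε) := by
            exact add_lt_add hk3 (add_lt_add hj hi)
        _ = 3 * ε := by ring
    have hεL : ε ≤ L / 4 := by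
      have := min_le_left L (2 * π - L); rw [hεdef]; linarith
    have hεR : ε ≤ (2 * π - L) / 4 := by
      have := min_le_right L (2 * π - L); rw [hεdef]; linarith
    rcases le_or_gt ((j:ℝ) - (i:ℝ)) 0 with hn | hn
    · have hnn : 2 * π * ((j:ℝ) - (i:ℝ)) ≤ 0 := by nlinarith
      have : L ≤ |L - 2 * π * ((j:ℝ) - (i:ℝ))| :=
        le_trans (by linarith) (le_abs_self _)
      linarith
    · have hge : (1:ℝ) ≤ (j:ℝ) - (i:ℝ) := by
        have hij : i < j := by exact_mod_cast sub_pos.mp hn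
        have : (1:ℤ) ≤ j - i := by omega
        exact_mod_cast this
      have hnn : 2 * π ≤ 2 * π * ((j:ℝ) - (i:ℝ)) := by nlinarith
      have : 2 * π - L ≤ |L - 2 * π * ((j:ℝ) - (i:ℝ))| :=
        le_trans (by linarith) (neg_le_abs _)
      linarith

end
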